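/- Let X ⊆ ℝⁿ be closed and nonempty. The distance function d_X(a) = d(a,X) is differentiable at every a ∈ ℝⁿ \ (X ∪ closure(M_X)), with gradient ∇d_X(a) = (a − m(a))/d_X(a). -/

import Mathlib

open Metric Set Filter Topology

noncomputable section

abbrev E (n : ℕ) := EuclideanSpace ℝ (Fin n)

/-- The set of closest points of `X` to `a`. -/
def mSet {n : ℕ} (X : Set (E n)) (a : E n) : Set (E n) :=
  {x ∈ X | dist a x = Metric.infDist a X}

/-- The medial axis: points with more than one closest point in `X`. -/
def medialAxis {n : ℕ} (X : Set (E n)) : Set (E n) :=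
  {a | ∃ x ∈ mSet X a, ∃ y ∈ mSet X a, x ≠ y}

lemma key_inner {n : ℕ} {y : E n} (h : E n) (hy : y ≠ 0) :
    (inner ℝ (‖y‖⁻¹ • y) h : ℝ) ≤ ‖y + h‖ - ‖y‖ := by
  have h1 : (inner ℝ y (y + h) : ℝ) ≤ ‖y‖ * ‖y + h‖ := real_inner_le_norm _ _
  rw [inner_add_right, real_inner_self_eq_norm_mul_norm] at h1
  rw [real_inner_smul_left]
  have hy' : 0 < ‖y‖ := norm_pos_iff.mpr hy
  have h2 : (inner ℝ y h : ℝ) ≤ ‖y‖ * (‖y + h‖ - ‖y‖) := by nlinarith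
  rw [inv_mul_le_iff₀ hy']
  linarith [h2]

theorem stmt_6 {n : ℕ} (X : Set (E n)) (hX : IsClosed X) (hne : X.Nonempty)
    (m : E n → E n) (hm : ∀ b ∉ medialAxis X, m b ∈ mSet X b)
    (a : E n) (ha : a ∉ X ∪ closure (medialAxis X)) :
    HasGradientAt (fun b => Metric.infDist b X)
      ((Metric.infDist a X)⁻¹ • (a - m a)) a := by
  have haX : a ∉ X := fun h => ha (Or.inl h)
  have hacl : a ∉ closure (medialAxis X) := fun h => ha (Or.inr h)
  have haM : a ∉ medialAxis X := fun h => hacl (subset_closure h)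
  set d : ℝ := Metric.infDist a X with hd_def
  have hd : 0 < d := (hX.notMem_iff_infDist_pos hne).mp haX
  have hma : m a ∈ mSet X a := hm a haM
  have hda : dist a (m a) = d := hma.2
  have hnorm : ‖a - m a‖ = d := by rw [← dist_eq_norm]; exact hda
  have hamne : a - m a ≠ 0 := by
    intro h; rw [h, norm_zero] at hnorm; linarith
  have unique : ∀ x ∈ mSet X a, x = m a := by
    intro x hx
    by_contra h
    exact haM ⟨x, hx, m a, hma, h⟩
  -- continuity of m at a
  have hcont : ∀ ε > 0, ∃ δ > 0, ∀ b, dist b a < δ → b ∉ medialAxis X →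
      dist (m b) (m a) < ε := by
    by_contra hc
    push_neg at hc
    obtain ⟨ε, hε, hc⟩ := hc
    choose b hb1 hb2 hb3 using fun k : ℕ => hc (1 / (k + 1)) (by positivity)
    have hbtend : Tendsto b atTop (𝓝 a) := by
      rw [tendsto_iff_dist_tendsto_zero]
      apply squeeze_zero (fun k => dist_nonneg) (fun k => (hb1 k).le)
      exact tendsto_one_div_add_atTop_nhds_zero_nat
    have hball : ∀ k, m (b k) ∈ closedBall a (2 * d + 2) := by
      intro k
      have h1 : dist (b k) a < 1 := lt_of_lt_of_le (hb1 k) (by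
        rw [div_le_one (by positivity)]; linarith)
      have h2 : dist (b k) (m (b k)) = Metric.infDist (b k) X := (hm (b k) (hb2 k)).2
      have h3 : Metric.infDist (b k) X ≤ d + dist (b k) a :=
        Metric.infDist_le_infDist_add_dist
      rw [mem_closedBall]
      calc dist (m (b k)) a ≤ dist (m (b k)) (b k) + dist (b k) a := dist_triangle _ _ _
        _ = Metric.infDist (b k) X + dist (b k) a := by rw [dist_comm, h2]
        _ ≤ d + dist (b k) a + dist (b k) a := by linarith
        _ ≤ 2 * d + 2 := by linarith
    obtain ⟨x, -, φ, hφ, hlim⟩ :=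
      (isCompact_closedBall a (2 * d + 2)).tendsto_subseq hball
    have hbφ : Tendsto (fun k => b (φ k)) atTop (𝓝 a) :=
      hbtend.comp hφ.tendsto_atTop
    have hxX : x ∈ X := hX.mem_of_tendsto hlim
      (Eventually.of_forall fun k => (hm (b (φ k)) (hb2 (φ k))).1)
    have hdx : dist a x = d := by
      have t1 : Tendsto (fun k => dist (b (φ k)) (m (b (φ k)))) atTop (𝓝 (dist a x)) :=
        Tendsto.dist hbφ hlim
      have t2 : Tendsto (fun k => Metric.infDist (b (φ k)) X) atTop (𝓝 d) :=
        (Metric.continuous_infDist_pt X).continuousAt.tendsto.comp hbφ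
      have : (fun k => dist (b (φ k)) (m (b (φ k)))) =
          fun k => Metric.infDist (b (φ k)) X := by
        funext k; exact (hm (b (φ k)) (hb2 (φ k))).2
      rw [this] at t1
      exact tendsto_nhds_unique t1 t2
    have hxm : x = m a := unique x ⟨hxX, hdx⟩
    rw [hxm] at hlim
    have := (hlim.eventually (Metric.ball_mem_nhds (m a) hε)).exists
    obtain ⟨k, hk⟩ := this
    exact absurd (mem_ball.mp hk) (not_lt.mpr (hb3 (φ k)))
  -- main estimate
  rw [hasGradientAt_iff_isLittleO, Asymptotics.isLittleO_iff]
  intro c hc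
  set v : E n := d⁻¹ • (a - m a) with hv_def
  have hgv : ‖a - m a‖⁻¹ • (a - m a) = v := by rw [hnorm]
  -- continuity of normalization at a - m a
  have hgcont : ContinuousAt (fun y : E n => ‖y‖⁻¹ • y) (a - m a) :=
    ((continuousAt_id.norm.inv₀ (by simp only [id_eq]; rw [hnorm]; positivity)).smul continuousAt_id)
  obtain ⟨ε', hε', hg⟩ := Metric.continuousAt_iff.mp hgcont c hc
  -- neighborhood where b ∉ medialAxis
  obtain ⟨δ₁, hδ₁, hδ₁M⟩ : ∃ δ > 0, ∀ b, dist b a < δ → b ∉ medialAxis X := by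
    have : (closure (medialAxis X))ᶜ ∈ 𝓝 a :=
      isClosed_closure.isOpen_compl.mem_nhds hacl
    obtain ⟨δ, hδ, hsub⟩ := Metric.mem_nhds_iff.mp this
    exact ⟨δ, hδ, fun b hb hbM => hsub (mem_ball.mpr hb) (subset_closure hbM)⟩
  obtain ⟨δ₂, hδ₂, hδ₂c⟩ := hcont ε' hε'
  have hmem : ∀ᶠ b in 𝓝 a, dist b a < min (min δ₁ δ₂) (min ε' d) :=
    Metric.eventually_nhds_iff.mpr
      ⟨min (min δ₁ δ₂) (min ε' d), by positivity, fun y hy => hy⟩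
  filter_upwards [hmem] with b hb
  have hb1 : dist b a < δ₁ := lt_of_lt_of_le hb (le_trans (min_le_left _ _) (min_le_left _ _))
  have hb2 : dist b a < δ₂ := lt_of_lt_of_le hb (le_trans (min_le_left _ _) (min_le_right _ _))
  have hbε : dist b a < ε' := lt_of_lt_of_le hb (le_trans (min_le_right _ _) (min_le_left _ _))
  have hbd : dist b a < d := lt_of_lt_of_le hb (le_trans (min_le_right _ _) (min_le_right _ _))
  have hbM : b ∉ medialAxis X := hδ₁M b hb1
  have hmb : m b ∈ mSet X b := hm b hbM
  have hmbX : m b ∈ X := hmb.1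
  have hfb : Metric.infDist b X = ‖b - m b‖ := by rw [← hmb.2, dist_eq_norm]
  have hamb : a - m b ≠ 0 := by
    intro h
    have : a = m b := by rwa [sub_eq_zero] at h
    exact haX (this ▸ hmbX)
  have hbma : b - m a ≠ 0 := by
    intro h
    have hbe : b = m a := by rwa [sub_eq_zero] at h
    have : dist a (m a) ≤ dist b a + 0 := by
      rw [← hbe] at hda ⊢
      calc dist a b ≤ dist b a := by rw [dist_comm]
        _ ≤ dist b a + 0 := by linarith
    rw [hda] at this
    linarith [hbd]
  -- bounds on the two normalized vectors
  set w : E n := ‖b - m a‖⁻¹ • (b - m a) with hw_def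
  set u : E n := ‖a - m b‖⁻¹ • (a - m b) with hu_def
  have hwv : ‖w - v‖ ≤ c := by
    have : dist (b - m a) (a - m a) < ε' := by
      rw [dist_eq_norm]
      have : b - m a - (a - m a) = b - a := by abel
      rw [this, ← dist_eq_norm]
      exact hbε
    have := hg this
    rw [hgv] at this
    rw [← dist_eq_norm]
    exact this.le
  have huv : ‖u - v‖ ≤ c := by
    have hmm : dist (m b) (m a) < ε' := hδ₂c b hb2 hbM
    have : dist (a - m b) (a - m a) < ε' := by
      rw [dist_eq_norm]
      have : a - m b - (a - m a) = m a - m b := by abel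
      rw [this, ← dist_eq_norm, dist_comm]
      exact hmm
    have := hg this
    rw [hgv] at this
    rw [← dist_eq_norm]
    exact this.le
  -- the two inequalities
  have hfa : d = ‖a - m a‖ := hnorm.symm
  have hupper : Metric.infDist b X - d - (inner ℝ v (b - a) : ℝ) ≤ c * ‖b - a‖ := by
    have h1 : Metric.infDist b X ≤ ‖b - m a‖ := by
      rw [← dist_eq_norm]; exact Metric.infDist_le_dist_of_mem hma.1
    have h2 : (inner ℝ w (a - b) : ℝ) ≤ ‖b - m a + (a - b)‖ - ‖b - m a‖ :=
      key_inner _ hbma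
    have he : b - m a + (a - b) = a - m a := by abel
    rw [he] at h2
    have h3 : ‖b - m a‖ - ‖a - m a‖ ≤ (inner ℝ w (b - a) : ℝ) := by
      have : (inner ℝ w (a - b) : ℝ) = -(inner ℝ w (b - a) : ℝ) := by
        rw [show a - b = -(b - a) by abel, inner_neg_right]
      linarith [h2, this.symm.le, this.le]
    have h4 : (inner ℝ w (b - a) : ℝ) - (inner ℝ v (b - a) : ℝ) =
        (inner ℝ (w - v) (b - a) : ℝ) := (inner_sub_left _ _ _).symm
    have h5 : (inner ℝ (w - v) (b - a) : ℝ) ≤ ‖w - v‖ * ‖b - a‖ := real_inner_le_norm _ _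
    have h6 : ‖w - v‖ * ‖b - a‖ ≤ c * ‖b - a‖ :=
      mul_le_mul_of_nonneg_right hwv (norm_nonneg _)
    linarith
  have hlower : -(c * ‖b - a‖) ≤ Metric.infDist b X - d - (inner ℝ v (b - a) : ℝ) := by
    have h1 : d ≤ ‖a - m b‖ := by
      rw [← dist_eq_norm]; exact Metric.infDist_le_dist_of_mem hmbX
    have h2 : (inner ℝ u (b - a) : ℝ) ≤ ‖a - m b + (b - a)‖ - ‖a - m b‖ :=
      key_inner _ hamb
    have he : a - m b + (b - a) = b - m b := by abel
    rw [he] at h2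
    have h3 : (inner ℝ u (b - a) : ℝ) - (inner ℝ v (b - a) : ℝ) =
        (inner ℝ (u - v) (b - a) : ℝ) := (inner_sub_left _ _ _).symm
    have h4 : (inner ℝ (v - u) (b - a) : ℝ) ≤ ‖v - u‖ * ‖b - a‖ := real_inner_le_norm _ _
    have h5 : (inner ℝ (v - u) (b - a) : ℝ) = -(inner ℝ (u - v) (b - a) : ℝ) := by
      rw [show v - u = -(u - v) by abel, inner_neg_left]
    have h6 : ‖v - u‖ = ‖u - v‖ := norm_sub_rev _ _
    have h7 : ‖u - v‖ * ‖b - a‖ ≤ c * ‖b - a‖ :=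
      mul_le_mul_of_nonneg_right huv (norm_nonneg _)
    have h8 : Metric.infDist b X - d ≥ (inner ℝ u (b - a) : ℝ) := by
      rw [hfb]; linarith
    rw [h6] at h4
    linarith
  rw [Real.norm_eq_abs, abs_le]
  exact ⟨hlower, hupper⟩
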